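/- Assume n_k = n/K and X^{(k)ᵀ}X^{(k)} = n_k·I_p for all k ∈ [K], and let τ₁,…,τ_K > 0. Let j ∉ J₀ be an index of a column of X₀ of form (A), i.e., X_{0,j} = (0ᵀ,…,0ᵀ, X^{(k₀)ᵀ}_{j₀}/τ_{k₀}, 0ᵀ,…,0ᵀ)ᵀ for some k₀ ∈ [K] and j₀ ∉ T*_{k₀} (a γ-block column with k₀ ∈ K*_{j₀}). Then ‖X_{0,j}ᵀ X_{0,J₀}(X_{0,J₀}ᵀX_{0,J₀})^{-1}‖₁ ≤ max_{j'∈S_{ℓ*}} max_{k∈K*_{j'}} (n_k/(τ_k·N*_{j'}))·(1 + Σ_{l∉K*_{j'}} τ_l). -/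

import Mathlib

open scoped BigOperators Matrix
open Classical MeasureTheory ProbabilityTheory

noncomputable section

/-- The ℓ₁ norm of a finitely supported real vector. -/
def l1 {ι : Type*} [Fintype ι] (x : ι → ℝ) : ℝ := ∑ i, |x i|

/-- The squared ℓ₂ norm. -/
def l2sq {ι : Type*} [Fintype ι] (x : ι → ℝ) : ℝ := ∑ i, (x i) ^ 2

/-- The ℓ₂ norm. -/
def l2 {ι : Type*} [Fintype ι] (x : ι → ℝ) : ℝ := Real.sqrt (l2sq x)

/-- The ℓ∞ norm. -/
def linf {ι : Type*} (x : ι → ℝ) : ℝ := sSup (Set.range fun i => |x i|)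

/-- Smallest eigenvalue (= smallest singular value, for the symmetric PSD
matrices considered here). -/
def lamMin {ι : Type*} [Fintype ι] (M : Matrix ι ι ℝ) : ℝ :=
  sInf {r : ℝ | ∃ x : ι → ℝ, x ≠ 0 ∧ M.mulVec x = r • x}

/-- Gram matrix of the columns of `M` indexed by the support of `θ`. -/
def gramOn {ι κ : Type*} [Fintype ι] (M : Matrix ι κ ℝ) (θ : κ → ℝ) :
    Matrix {c // θ c ≠ 0} {c // θ c ≠ 0} ℝ :=
  fun a b => ∑ r, M r a.val * M r b.val

/-- ‖(M_J^T M_J)⁻¹ M_J^T M_j‖₁ for a column index `j` (J = support of θ). -/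
def icVal {ι κ : Type*} [Fintype ι] [Fintype κ] [DecidableEq κ]
    (M : Matrix ι κ ℝ) (θ : κ → ℝ) (j : κ) : ℝ :=
  l1 ((gramOn M θ)⁻¹.mulVec fun a : {c // θ c ≠ 0} => ∑ r, M r a.val * M r j)

/-- max over j outside the support of θ of `icVal`. -/
def icSup {ι κ : Type*} [Fintype ι] [Fintype κ] [DecidableEq κ]
    (M : Matrix ι κ ℝ) (θ : κ → ℝ) : ℝ :=
  sSup {x : ℝ | ∃ j, θ j = 0 ∧ x = icVal M θ j}

/-- The design matrix 𝒳₀ of the overparametrized (proposed) approach. -/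
def X0 {K p : ℕ} (nk : Fin K → ℕ) (X : (k : Fin K) → Matrix (Fin (nk k)) (Fin p) ℝ)
    (τ : Fin K → ℝ) : Matrix ((k : Fin K) × Fin (nk k)) (Fin p ⊕ Fin K × Fin p) ℝ :=
  fun r c => Sum.elim (fun j => X r.1 r.2 j)
    (fun q => if r.1 = q.1 then X r.1 r.2 q.2 / τ q.1 else 0) c

/-- The parameter vector θ*₀ = (β̄*ᵀ, τ₁(β*₁-β̄*)ᵀ, …, τ_K(β*_K-β̄*)ᵀ)ᵀ. -/
def theta0 {K p : ℕ} (β : Fin K → Fin p → ℝ) (βbar : Fin p → ℝ) (τ : Fin K → ℝ) :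
    (Fin p ⊕ Fin K × Fin p) → ℝ :=
  Sum.elim βbar fun q => τ q.1 * (β q.1 q.2 - βbar q.2)

/-- The design matrix 𝒳_ℓ of the basic approach with reference strata ℓ. -/
def Xl {K p : ℕ} (nk : Fin K → ℕ) (X : (k : Fin K) → Matrix (Fin (nk k)) (Fin p) ℝ)
    (τ : Fin K → ℝ) (ℓ : Fin p → Fin K) :
    Matrix ((k : Fin K) × Fin (nk k)) (Fin p ⊕ {q : Fin K × Fin p // ℓ q.2 ≠ q.1}) ℝ :=
  fun r c => Sum.elim (fun j => X r.1 r.2 j)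
    (fun q => if r.1 = q.val.1 then X r.1 r.2 q.val.2 / τ q.val.1 else 0) c

/-- The parameter vector θ*_ℓ of the basic approach with reference strata ℓ. -/
def thetal {K p : ℕ} (β : Fin K → Fin p → ℝ) (τ : Fin K → ℝ) (ℓ : Fin p → Fin K) :
    (Fin p ⊕ {q : Fin K × Fin p // ℓ q.2 ≠ q.1}) → ℝ :=
  Sum.elim (fun j => β (ℓ j) j)
    fun q => τ q.val.1 * (β q.val.1 q.val.2 - β (ℓ q.val.2) q.val.2)

/-- Multiplicity of the value `v` in the collection (0, β_{1,j}, …, β_{K,j}). -/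
def modeCount {K p : ℕ} (β : Fin K → Fin p → ℝ) (j : Fin p) (v : ℝ) : ℕ :=
  (if v = 0 then 1 else 0) + Nat.card {k : Fin K // β k j = v}

/-- `βbar j` is the unique mode of (0, β_{1,j}, …, β_{K,j}) for every j. -/
def IsUniqueMode {K p : ℕ} (β : Fin K → Fin p → ℝ) (βbar : Fin p → ℝ) : Prop :=
  ∀ j v, v ≠ βbar j → modeCount β j v < modeCount β j (βbar j)

/-- Lasso objective (1/(2n))‖Y − Mθ‖₂² + λ₁‖θ‖₁. -/
def lassoObj {ι κ : Type*} [Fintype ι] [Fintype κ] (n : ℕ) (M : Matrix ι κ ℝ)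
    (Y : ι → ℝ) (lam1 : ℝ) (θ : κ → ℝ) : ℝ :=
  (1 / (2 * (n : ℝ))) * l2sq (fun r => Y r - M.mulVec θ r) + lam1 * l1 θ


/-- N*_j = n·|K*_j|/K. -/
def Nstar {K p : ℕ} (n : ℕ) (β : Fin K → Fin p → ℝ) (βbar : Fin p → ℝ)
    (j : Fin p) : ℝ :=
  (n : ℝ) * (Nat.card {k : Fin K // β k j = βbar j}) / K

/-- bound on ‖𝒳₀ⱼᵀ𝒳₀_{J₀}(𝒳₀_{J₀}ᵀ𝒳₀_{J₀})⁻¹‖₁ for a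
column of form (A), i.e. the γ-block column (k₀, j₀) with k₀ ∈ K*_{j₀}. -/
theorem statement_16 {K p : ℕ} (hK : 0 < K)
    (nk : Fin K → ℕ) (n : ℕ) (hn : n = ∑ k, nk k)
    (hbal : ∀ k, K * nk k = n)
    (X : (k : Fin K) → Matrix (Fin (nk k)) (Fin p) ℝ)
    (hortho : ∀ k, (X k)ᵀ * X k = (nk k : ℝ) • (1 : Matrix (Fin p) (Fin p) ℝ))
    (β : Fin K → Fin p → ℝ) (βbar : Fin p → ℝ) (hmode : IsUniqueMode β βbar)
    (τ : Fin K → ℝ) (hτ : ∀ k, 0 < τ k)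
    (hGram : IsUnit (gramOn (X0 nk X τ) (theta0 β βbar τ)))
    (k0 : Fin K) (j0 : Fin p) (hk0 : β k0 j0 = βbar j0) :
    l1 (Matrix.vecMul
        (fun a : {c // theta0 β βbar τ c ≠ 0} =>
          ∑ r, X0 nk X τ r (Sum.inr (k0, j0)) * X0 nk X τ r a.val)
        (gramOn (X0 nk X τ) (theta0 β βbar τ))⁻¹)
      ≤ sSup {x : ℝ | ∃ j' : Fin p, βbar j' ≠ 0 ∧ ∃ k : Fin K, β k j' = βbar j' ∧
          x = (nk k : ℝ) / (τ k * Nstar n β βbar j')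
            * (1 + ∑ l ∈ Finset.univ.filter fun l => β l j' ≠ βbar j', τ l)} := by
  classical
  -- abbreviations
  have hτ' : ∀ k, τ k ≠ 0 := fun k => (hτ k).ne'
  set M : Matrix ((k : Fin K) × Fin (nk k)) (Fin p ⊕ Fin K × Fin p) ℝ := X0 nk X τ with hMdef
  set θ : (Fin p ⊕ Fin K × Fin p) → ℝ := theta0 β βbar τ with hθdef
  have sum_sig : ∀ (f : (k : Fin K) × Fin (nk k) → ℝ),
      ∑ r : (k : Fin K) × Fin (nk k), f r = ∑ k, ∑ i : Fin (nk k), f ⟨k, i⟩ := by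
    intro f; rw [← Finset.univ_sigma_univ, Finset.sum_sigma]
  have col_inner : ∀ (k : Fin K) (j j' : Fin p),
      ∑ r : Fin (nk k), X k r j * X k r j' = if j = j' then (nk k : ℝ) else 0 := by
    intro k j j'
    have h := congrFun (congrFun (hortho k) j) j'
    simpa [Matrix.mul_apply, Matrix.transpose_apply, Matrix.smul_apply, Matrix.one_apply,
      mul_ite, mul_one, mul_zero] using h
  have hMl : ∀ (r : (k : Fin K) × Fin (nk k)) (j : Fin p), M r (Sum.inl j) = X r.1 r.2 j := by
    intro r j; rfl
  have hMr : ∀ (r : (k : Fin K) × Fin (nk k)) (k : Fin K) (j : Fin p),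
      M r (Sum.inr (k, j)) = if r.1 = k then X r.1 r.2 j / τ k else 0 := by
    intro r k j; rfl
  -- Gram entries
  have Gll : ∀ j j' : Fin p,
      ∑ r, M r (Sum.inl j) * M r (Sum.inl j') = if j = j' then (n : ℝ) else 0 := by
    intro j j'
    rw [sum_sig]
    simp only [hMl]
    rw [Finset.sum_congr rfl (fun k _ => col_inner k j j')]
    by_cases h : j = j'
    · simp only [h, if_true]
      rw [hn]; push_cast; ring
    · simp [h]
  have Glr : ∀ (j : Fin p) (k : Fin K) (j' : Fin p),
      ∑ r, M r (Sum.inl j) * M r (Sum.inr (k, j')) = if j = j' then (nk k : ℝ) / τ k else 0 := by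
    intro j k j'
    rw [sum_sig]
    simp only [hMl, hMr]
    have step : ∀ k' : Fin K,
        (∑ i : Fin (nk k'), X k' i j * (if k' = k then X k' i j' / τ k else 0))
          = if k' = k then (if j = j' then (nk k : ℝ) else 0) / τ k else 0 := by
      intro k'
      by_cases hk : k' = k
      · subst hk
        simp only [if_true]
        rw [← col_inner k' j j', Finset.sum_div]
        exact Finset.sum_congr rfl fun i _ => by ring
      · simp [hk]
    rw [Finset.sum_congr rfl fun k' _ => step k', Finset.sum_ite_eq' Finset.univ k]
    simp only [Finset.mem_univ, if_true]
    split_ifs <;> simp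
  have Gsymm : ∀ c d, ∑ r, M r c * M r d = ∑ r, M r d * M r c := by
    intro c d; exact Finset.sum_congr rfl fun r _ => mul_comm _ _
  have Grl : ∀ (k : Fin K) (j j' : Fin p),
      ∑ r, M r (Sum.inr (k, j)) * M r (Sum.inl j') = if j = j' then (nk k : ℝ) / τ k else 0 := by
    intro k j j'
    rw [Gsymm, Glr j' k j]
    by_cases h : j = j' <;> simp [h, eq_comm]
  have Grr : ∀ (k : Fin K) (j : Fin p) (k' : Fin K) (j' : Fin p),
      ∑ r, M r (Sum.inr (k, j)) * M r (Sum.inr (k', j')) =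
        if k = k' ∧ j = j' then (nk k : ℝ) / (τ k * τ k) else 0 := by
    intro k j k' j'
    rw [sum_sig]
    simp only [hMr]
    by_cases hk : k = k'
    · subst hk
      have step : ∀ k'' : Fin K,
          (∑ i : Fin (nk k''), (if k'' = k then X k'' i j / τ k else 0) *
            (if k'' = k then X k'' i j' / τ k else 0))
            = if k'' = k then (if j = j' then (nk k : ℝ) else 0) / (τ k * τ k) else 0 := by
        intro k''
        by_cases h : k'' = k
        · subst h
          simp only [if_true]
          rw [← col_inner k'' j j', Finset.sum_div]
          exact Finset.sum_congr rfl fun i _ => by ring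
        · simp [h]
      rw [Finset.sum_congr rfl fun k'' _ => step k'', Finset.sum_ite_eq' Finset.univ k]
      simp only [Finset.mem_univ, if_true, true_and]
      split_ifs <;> simp
    · have step : ∀ (k'' : Fin K) (i : Fin (nk k'')),
          (if k'' = k then X k'' i j / τ k else 0) * (if k'' = k' then X k'' i j' / τ k' else 0) = 0 := by
        intro k'' i
        rcases eq_or_ne k'' k with h1 | h1
        · rcases eq_or_ne k'' k' with h2 | h2
          · exact absurd (h1.symm.trans h2) hk
          · rw [if_neg h2, mul_zero]
        · rw [if_neg h1, zero_mul]
      have hz : ∑ k'' : Fin K, ∑ i : Fin (nk k''),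
          ((if k'' = k then X k'' i j / τ k else 0) * (if k'' = k' then X k'' i j' / τ k' else 0)) = 0 :=
        Finset.sum_eq_zero fun k'' _ => Finset.sum_eq_zero fun i _ => step k'' i
      rw [hz, if_neg (fun h => hk h.1)]
  -- support description
  have hθl : ∀ j : Fin p, θ (Sum.inl j) = βbar j := fun j => rfl
  have hθr : ∀ (k : Fin K) (j : Fin p), θ (Sum.inr (k, j)) = τ k * (β k j - βbar j) := by
    intro k j; rfl
  have hθr' : ∀ (k : Fin K) (j : Fin p), θ (Sum.inr (k, j)) ≠ 0 ↔ β k j ≠ βbar j := by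
    intro k j
    rw [hθr]
    simp [hτ' k, sub_eq_zero]
  -- nonnegativity of the RHS set elements
  have hset_nonneg : ∀ x ∈ {x : ℝ | ∃ j' : Fin p, βbar j' ≠ 0 ∧ ∃ k : Fin K, β k j' = βbar j' ∧
      x = (nk k : ℝ) / (τ k * Nstar n β βbar j')
        * (1 + ∑ l ∈ Finset.univ.filter fun l => β l j' ≠ βbar j', τ l)}, 0 ≤ x := by
    rintro x ⟨j', -, k, -, rfl⟩
    have h1 : (0 : ℝ) ≤ (nk k : ℝ) / (τ k * Nstar n β βbar j') := by
      apply div_nonneg (Nat.cast_nonneg _)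
      apply mul_nonneg (hτ k).le
      unfold Nstar
      positivity
    have h2 : (0 : ℝ) ≤ 1 + ∑ l ∈ Finset.univ.filter fun l => β l j' ≠ βbar j', τ l :=
      add_nonneg zero_le_one (Finset.sum_nonneg fun l _ => (hτ l).le)
    exact mul_nonneg h1 h2
  by_cases hb0 : βbar j0 = 0
  · -- column orthogonal to everything in the support: LHS = 0
    have hv : (fun a : {c // θ c ≠ 0} => ∑ r, M r (Sum.inr (k0, j0)) * M r a.val) = 0 := by
      funext a
      obtain ⟨c, hc⟩ := a
      match c with
      | Sum.inl j =>
        have hj : ¬ (j0 = j) := by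
          rintro rfl
          exact hc (by rw [hθl, hb0])
        simpa [Grl k0 j0 j, hj] using (by rfl : (0:ℝ) = 0)
      | Sum.inr (k, j) =>
        have hkj : ¬ (k0 = k ∧ j0 = j) := by
          rintro ⟨rfl, rfl⟩
          exact ((hθr' k0 j0).mp hc) hk0
        simpa [Grr k0 j0 k j, hkj] using (by rfl : (0:ℝ) = 0)
    rw [hv, Matrix.zero_vecMul]
    have : l1 (0 : {c // θ c ≠ 0} → ℝ) = 0 := by simp [l1]
    rw [this]
    exact Real.sSup_nonneg hset_nonneg
  · -- main case
    -- positivity facts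
    have hnpos : 0 < n := by
      by_contra h
      push_neg at h
      have hn0 : n = 0 := Nat.le_zero.mp h
      have hnk0 : ∀ k, nk k = 0 := by
        intro k
        have h1 : K * nk k = 0 := by rw [hbal k, hn0]
        rcases Nat.mul_eq_zero.mp h1 with h' | h'
        · omega
        · exact h'
      have hemp : IsEmpty ((k : Fin K) × Fin (nk k)) := by
        refine ⟨fun r => ?_⟩
        have h1 : (r.2 : ℕ) < nk r.1 := r.2.2
        have h2 := hnk0 r.1
        omega
      have hG0 : gramOn M θ = 0 := by
        funext a b
        simp [gramOn, Finset.univ_eq_empty]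
      have hne : Nonempty {c // θ c ≠ 0} := ⟨⟨Sum.inl j0, by rw [hθl]; exact hb0⟩⟩
      have := (Matrix.isUnit_iff_isUnit_det _).mp hGram
      rw [hG0, (haveI := hne; Matrix.det_zero)] at this
      exact this.ne_zero rfl
    have hnkpos : ∀ k, 0 < nk k := by
      intro k
      rcases Nat.eq_zero_or_pos (nk k) with h | h
      · have := hbal k
        rw [h, Nat.mul_zero] at this
        omega
      · exact h
    have hcard : 0 < Nat.card {k : Fin K // β k j0 = βbar j0} := by
      have : Nonempty {k : Fin K // β k j0 = βbar j0} := ⟨⟨k0, hk0⟩⟩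
      exact Nat.card_pos
    set N : ℝ := Nstar n β βbar j0 with hNdef
    have hNpos : 0 < N := by
      rw [hNdef]
      unfold Nstar
      have h1 : (0:ℝ) < (n : ℝ) := by exact_mod_cast hnpos
      have h2 : (0:ℝ) < (Nat.card {k : Fin K // β k j0 = βbar j0} : ℝ) := by exact_mod_cast hcard
      have h3 : (0:ℝ) < (K : ℝ) := by exact_mod_cast hK
      exact div_pos (mul_pos h1 h2) h3
    set c0 : ℝ := (nk k0 : ℝ) / (τ k0 * N) with hc0def
    have hc0pos : 0 < c0 := by
      rw [hc0def]
      have : (0:ℝ) < (nk k0 : ℝ) := by exact_mod_cast hnkpos k0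
      exact div_pos this (mul_pos (hτ k0) hNpos)
    -- the candidate row vector
    set W : (Fin p ⊕ Fin K × Fin p) → ℝ :=
      Sum.elim (fun j => if j = j0 then c0 else 0)
        (fun q => if q.2 = j0 ∧ β q.1 j0 ≠ βbar j0 then -(c0 * τ q.1) else 0) with hWdef
    have hWsupp : ∀ c, θ c = 0 → W c = 0 := by
      rintro (j | ⟨k, j⟩) hc
      · have hj : j ≠ j0 := by
          rintro rfl
          exact hb0 hc
        simp [hWdef, hj]
      · have hb : β k j = βbar j := by
          by_contra h
          exact ((hθr' k j).mpr h) hc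
        have hcon : ¬ (j = j0 ∧ β k j0 ≠ βbar j0) := by
          rintro ⟨rfl, h2⟩
          exact h2 hb
        simp only [hWdef, Sum.elim_inr, if_neg hcon]
    -- key: the total count identity  n - ∑_{k : β k j0 ≠ βbar j0} nk k = N
    have hcount : (n : ℝ) - ∑ k ∈ Finset.univ.filter (fun k => β k j0 ≠ βbar j0), (nk k : ℝ) = N := by
      have hnkr : ∀ k, (nk k : ℝ) = (n : ℝ) / K := by
        intro k
        have := hbal k
        have hKr : (K : ℝ) ≠ 0 := by positivity
        field_simp
        rw [mul_comm]
        exact_mod_cast this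
      have hcard' : (Nat.card {k : Fin K // β k j0 = βbar j0} : ℝ)
          = ((Finset.univ.filter (fun k => β k j0 = βbar j0)).card : ℝ) := by
        rw [Nat.card_eq_fintype_card, Fintype.card_subtype]
      have hsplit : (Finset.univ.filter (fun k => β k j0 = βbar j0)).card
          + (Finset.univ.filter (fun k => β k j0 ≠ βbar j0)).card = K := by
        have h := Finset.card_filter_add_card_filter_not
          (s := (Finset.univ : Finset (Fin K))) (p := fun k => β k j0 = βbar j0)
        simpa using h
      rw [hNdef]
      unfold Nstar
      rw [Finset.sum_congr rfl (fun k _ => hnkr k), Finset.sum_const, hcard']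
      have hKr : (K : ℝ) ≠ 0 := by positivity
      have hKeq : ((Finset.univ.filter (fun k => β k j0 = βbar j0)).card : ℝ)
          = (K : ℝ) - ((Finset.univ.filter (fun k => β k j0 ≠ βbar j0)).card : ℝ) := by
        have := hsplit
        push_cast [← this]
        ring
      rw [hKeq]
      field_simp
      have hKK := mul_inv_cancel₀ hKr
      linear_combination (-(n:ℝ) * ((Finset.univ.filter (fun k => β k j0 ≠ βbar j0)).card : ℝ)) * hKK
    -- the key identity: W * Gram = target inner products, on the support
    have key : ∀ d, θ d ≠ 0 →
        ∑ c, W c * (∑ r, M r c * M r d) = ∑ r, M r (Sum.inr (k0, j0)) * M r d := by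
      intro d hd
      rw [Fintype.sum_sum_type]
      have hL1 : ∀ d', (∑ j, W (Sum.inl j) * (∑ r, M r (Sum.inl j) * M r d'))
          = c0 * ∑ r, M r (Sum.inl j0) * M r d' := by
        intro d'
        have : ∀ j, W (Sum.inl j) * (∑ r, M r (Sum.inl j) * M r d')
            = if j = j0 then c0 * ∑ r, M r (Sum.inl j0) * M r d' else 0 := by
          intro j
          by_cases h : j = j0 <;> simp [hWdef, h]
        rw [Finset.sum_congr rfl fun j _ => this j, Finset.sum_ite_eq' Finset.univ j0]
        simp
      have hL2 : ∀ d', (∑ q : Fin K × Fin p, W (Sum.inr q) * (∑ r, M r (Sum.inr q) * M r d'))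
          = ∑ k, (if β k j0 ≠ βbar j0 then -(c0 * τ k) * ∑ r, M r (Sum.inr (k, j0)) * M r d' else 0) := by
        intro d'
        rw [Fintype.sum_prod_type]
        refine Finset.sum_congr rfl fun k _ => ?_
        have : ∀ j, W (Sum.inr (k, j)) * (∑ r, M r (Sum.inr (k, j)) * M r d')
            = if j = j0 then (if β k j0 ≠ βbar j0 then -(c0 * τ k) * ∑ r, M r (Sum.inr (k, j0)) * M r d' else 0) else 0 := by
          intro j
          by_cases h : j = j0
          · by_cases h2 : β k j0 ≠ βbar j0 <;> simp [hWdef, h, h2]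
          · simp [hWdef, h]
        rw [Finset.sum_congr rfl fun j _ => this j, Finset.sum_ite_eq' Finset.univ j0]
        simp
      rw [hL1 d, hL2 d]
      match d with
      | Sum.inl j' =>
        rw [Gll j0 j', Grl k0 j0 j']
        have hstep : ∀ k : Fin K, (if β k j0 ≠ βbar j0 then -(c0 * τ k) * ∑ r, M r (Sum.inr (k, j0)) * M r (Sum.inl j') else 0)
            = if j0 = j' then (if β k j0 ≠ βbar j0 then -(c0 * (nk k : ℝ)) else 0) else 0 := by
          intro k
          rw [Grl k j0 j']
          have hτk := hτ' k
          by_cases h2 : β k j0 ≠ βbar j0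
          · rw [if_pos h2]
            by_cases h1 : j0 = j'
            · rw [if_pos h1, if_pos h1, if_pos h2]
              field_simp
            · rw [if_neg h1, if_neg h1, mul_zero]
          · rw [if_neg h2]
            by_cases h1 : j0 = j'
            · rw [if_pos h1, if_neg h2]
            · rw [if_neg h1]
        rw [Finset.sum_congr rfl fun k _ => hstep k]
        by_cases h : j0 = j'
        · simp only [if_pos h]
          rw [← Finset.sum_filter]
          have hs1 : ∑ k ∈ Finset.univ.filter (fun k => β k j0 ≠ βbar j0), -(c0 * (nk k : ℝ))
              = -(c0 * ∑ k ∈ Finset.univ.filter (fun k => β k j0 ≠ βbar j0), (nk k : ℝ)) := by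
            rw [Finset.mul_sum]
            exact Finset.sum_neg_distrib _
          rw [hs1]
          have hs2 : c0 * (n : ℝ) + -(c0 * ∑ k ∈ Finset.univ.filter (fun k => β k j0 ≠ βbar j0), (nk k : ℝ)) = c0 * N := by
            rw [← hcount]; ring
          rw [hs2, hc0def]
          have hN0 : N ≠ 0 := hNpos.ne'
          have hτ0 := hτ' k0
          field_simp
        · simp [h]
      | Sum.inr (k', j') =>
        have hd' : β k' j' ≠ βbar j' := (hθr' k' j').mp hd
        rw [Glr j0 k' j', Grr k0 j0 k' j']
        have hstep : ∀ k : Fin K, (if β k j0 ≠ βbar j0 then -(c0 * τ k) * ∑ r, M r (Sum.inr (k, j0)) * M r (Sum.inr (k', j')) else 0)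
            = if k = k' then (if β k j0 ≠ βbar j0 then (if j0 = j' then -(c0 * τ k) * ((nk k : ℝ) / (τ k * τ k)) else 0) else 0) else 0 := by
          intro k
          rw [Grr k j0 k' j']
          by_cases h1 : k = k' <;> by_cases h2 : β k j0 ≠ βbar j0 <;> by_cases h3 : j0 = j' <;>
            simp [h1, h2, h3] <;> tauto
        rw [Finset.sum_congr rfl fun k _ => hstep k, Finset.sum_ite_eq' Finset.univ k']
        simp only [Finset.mem_univ, if_true]
        by_cases h3 : j0 = j'
        · have h2 : β k' j0 ≠ βbar j0 := by rw [h3]; exact hd'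
          have hk0k' : ¬ (k0 = k') := by
            rintro rfl
            exact h2 hk0
          rw [if_pos h3, if_pos h2, if_pos h3,
            if_neg (fun hh : k0 = k' ∧ j0 = j' => hk0k' hh.1)]
          have hτk' := hτ' k'
          field_simp
          ring
        · rw [if_neg h3, if_neg (fun hh : k0 = k' ∧ j0 = j' => h3 hh.2), mul_zero]
          by_cases h2 : β k' j0 ≠ βbar j0
          · rw [if_pos h2, if_neg h3, add_zero]
          · rw [if_neg h2, add_zero]
    -- compute the vecMul with the Gram matrix
    have hsubsum : ∀ (f : (Fin p ⊕ Fin K × Fin p) → ℝ), (∀ c, θ c = 0 → f c = 0) →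
        ∑ a : {c // θ c ≠ 0}, f a.val = ∑ c, f c := by
      intro f hf
      rw [← Finset.sum_subtype (Finset.univ.filter (fun c => θ c ≠ 0)) (by simp) f]
      exact Finset.sum_subset (Finset.subset_univ _) (fun c _ hc => hf c (by simpa using hc))
    have hvG : Matrix.vecMul (fun a : {c // θ c ≠ 0} => W a.val) (gramOn M θ)
        = (fun a : {c // θ c ≠ 0} => ∑ r, M r (Sum.inr (k0, j0)) * M r a.val) := by
      funext b
      exact (hsubsum (fun c => W c * (∑ r, M r c * M r b.val))
        (fun c hc => by simp only [hWsupp c hc, zero_mul])).trans (key b.val b.prop)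
    have hdet : IsUnit (gramOn M θ).det := (Matrix.isUnit_iff_isUnit_det _).mp hGram
    have hfinal : Matrix.vecMul
        (fun a : {c // θ c ≠ 0} => ∑ r, M r (Sum.inr (k0, j0)) * M r a.val)
        (gramOn M θ)⁻¹ = (fun a : {c // θ c ≠ 0} => W a.val) := by
      rw [← hvG, Matrix.vecMul_vecMul, Matrix.mul_nonsing_inv _ hdet, Matrix.vecMul_one]
    rw [hfinal]
    -- compute the l1 norm of W restricted to the support
    have hl1 : l1 (fun a : {c // θ c ≠ 0} => W a.val)
        = c0 * (1 + ∑ l ∈ Finset.univ.filter fun l => β l j0 ≠ βbar j0, τ l) := by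
      unfold l1
      refine Eq.trans (hsubsum (fun c => |W c|) (fun c hc => by simp only [hWsupp c hc, abs_zero])) ?_
      rw [Fintype.sum_sum_type]
      have h1 : ∑ j, |W (Sum.inl j)| = c0 := by
        have : ∀ j, |W (Sum.inl j)| = if j = j0 then c0 else 0 := by
          intro j
          by_cases h : j = j0 <;> simp [hWdef, h, abs_of_pos hc0pos]
        rw [Finset.sum_congr rfl fun j _ => this j, Finset.sum_ite_eq' Finset.univ j0]
        simp
      have h2 : ∑ q : Fin K × Fin p, |W (Sum.inr q)|
          = ∑ l ∈ Finset.univ.filter (fun l => β l j0 ≠ βbar j0), c0 * τ l := by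
        rw [Fintype.sum_prod_type, Finset.sum_filter]
        refine Finset.sum_congr rfl fun k _ => ?_
        have habs : ∀ j, |W (Sum.inr (k, j))| = if j = j0 then (if β k j0 ≠ βbar j0 then c0 * τ k else 0) else 0 := by
          intro j
          by_cases h : j = j0
          · by_cases h2 : β k j0 ≠ βbar j0
            · simp [hWdef, h, h2, abs_of_pos (mul_pos hc0pos (hτ k))]
            · simp [hWdef, h, h2]
          · simp [hWdef, h]
        rw [Finset.sum_congr rfl fun j _ => habs j, Finset.sum_ite_eq' Finset.univ j0]
        simp
      rw [h1, h2, mul_add, mul_one, Finset.mul_sum]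
    rw [hl1]
    -- membership and boundedness
    have hmem : c0 * (1 + ∑ l ∈ Finset.univ.filter fun l => β l j0 ≠ βbar j0, τ l)
        ∈ {x : ℝ | ∃ j' : Fin p, βbar j' ≠ 0 ∧ ∃ k : Fin K, β k j' = βbar j' ∧
          x = (nk k : ℝ) / (τ k * Nstar n β βbar j')
            * (1 + ∑ l ∈ Finset.univ.filter fun l => β l j' ≠ βbar j', τ l)} := by
      exact ⟨j0, hb0, k0, hk0, by rw [hc0def, hNdef]⟩
    have hbdd : BddAbove {x : ℝ | ∃ j' : Fin p, βbar j' ≠ 0 ∧ ∃ k : Fin K, β k j' = βbar j' ∧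
          x = (nk k : ℝ) / (τ k * Nstar n β βbar j')
            * (1 + ∑ l ∈ Finset.univ.filter fun l => β l j' ≠ βbar j', τ l)} := by
      have hsub : {x : ℝ | ∃ j' : Fin p, βbar j' ≠ 0 ∧ ∃ k : Fin K, β k j' = βbar j' ∧
          x = (nk k : ℝ) / (τ k * Nstar n β βbar j')
            * (1 + ∑ l ∈ Finset.univ.filter fun l => β l j' ≠ βbar j', τ l)}
          ⊆ Set.range (fun q : Fin p × Fin K => (nk q.2 : ℝ) / (τ q.2 * Nstar n β βbar q.1)
            * (1 + ∑ l ∈ Finset.univ.filter fun l => β l q.1 ≠ βbar q.1, τ l)) := by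
        rintro x ⟨j', -, k, -, rfl⟩
        exact ⟨(j', k), rfl⟩
      exact BddAbove.mono hsub (Set.finite_range _).bddAbove
    exact le_csSup hbdd hmem


end
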